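/- For all n ≥ 0, g_n = 2·h_n + g'_n, where g'_n = g_n mod 2 and h_n = ∑_{0 ≤ i < n} g'_i. -/

import Mathlib

open Finset

lemma gut_key (g : ℕ → ℕ)
    (hg0 : g 0 = 0) (hg : ∀ n : ℕ, 1 ≤ n → g n = n - g (g (n - 1) / 2)) :
    ∀ n : ℕ, g n ≤ n ∧ g n ≤ g (n + 1) ∧ g (n + 1) ≤ g n + 1 := by
  intro n
  induction n using Nat.strong_induction_on with
  | _ n ih =>
    match n with
    | 0 =>
      have h1 := hg 1 (by norm_num)
      simp [hg0] at h1
      simp only [Nat.zero_add]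
      omega
    | m + 1 =>
      have pm := ih m (Nat.lt_succ_self m)
      have ham : g m / 2 ≤ m := le_trans (Nat.div_le_self _ _) pm.1
      have pa := ih (g m / 2) (by omega)
      have hn := hg (m + 1) (by omega)
      have hn1 := hg (m + 1 + 1) (by omega)
      simp only [Nat.add_sub_cancel] at hn hn1
      have hb : g (m + 1) / 2 = g m / 2 ∨ g (m + 1) / 2 = g m / 2 + 1 := by omega
      rcases hb with hb | hb <;> rw [hb] at hn1 <;> omega

lemma gut_odd_step (g : ℕ → ℕ)
    (hg0 : g 0 = 0) (hg : ∀ n : ℕ, 1 ≤ n → g n = n - g (g (n - 1) / 2)) :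
    ∀ n : ℕ, g n % 2 = 1 → g (n + 1) = g n + 1 := by
  intro n hodd
  match n with
  | 0 => omega
  | m + 1 =>
    have pm := gut_key g hg0 hg m
    have ham : g m / 2 ≤ m := le_trans (Nat.div_le_self _ _) pm.1
    have pa := gut_key g hg0 hg (g m / 2)
    have hn := hg (m + 1) (by omega)
    have hn1 := hg (m + 1 + 1) (by omega)
    simp only [Nat.add_sub_cancel] at hn hn1
    have hb : g (m + 1) / 2 = g m / 2 := by omega
    rw [hb] at hn1
    omega

/-- `g_n = 2h_n + g'_n`, where `g'_n = g_n mod 2` and `h_n = ∑_{0 ≤ i < n} g'_i`,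
for Gutkovskiy's sequence `g`. -/
theorem gut_eq_two_h_add_parity (g : ℕ → ℕ)
    (hg0 : g 0 = 0) (hg : ∀ n : ℕ, 1 ≤ n → g n = n - g (g (n - 1) / 2)) :
    ∀ n : ℕ, g n = 2 * (∑ i ∈ Finset.range n, g i % 2) + g n % 2 := by
  intro n
  induction n with
  | zero => simp [hg0]
  | succ n ihn =>
    rw [Finset.sum_range_succ]
    have hkey := gut_key g hg0 hg n
    by_cases h : g n % 2 = 1
    · have := gut_odd_step g hg0 hg n h
      omega
    · omega
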